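/- In the flip graph of (◇^n, φ), the maximum over all φ-monotone paths γ of the minimum flip-graph distance from γ to a combinatorially coherent φ-monotone path equals n − 2, for n ≥ 2. -/

import Mathlib

open scoped BigOperators

/-- The `i`-th standard basis vector of `ℝ^n`. -/
noncomputable def stdVec (n : ℕ) (i : Fin n) : Fin n → ℝ := Pi.single i 1

/-- The last standard basis vector `e_n` of `ℝ^{n+2}`. -/
noncomputable def lastVec (n : ℕ) : Fin (n + 2) → ℝ := stdVec (n + 2) (Fin.last (n + 1))

/-- The linear functional `φ(x) = ∑ i, a i * x i`. -/
def phi (n : ℕ) (a : Fin (n + 2) → ℝ) (x : Fin (n + 2) → ℝ) : ℝ := ∑ i, a i * x i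

/-- A vertex of the cross-polytope `◇^n`: one of the `2n` points `±e_i`. -/
def IsCPVertex (n : ℕ) (x : Fin n → ℝ) : Prop :=
  ∃ i : Fin n, x = stdVec n i ∨ x = -stdVec n i

/-- The cross-polytope `◇^n = conv{±e_1, …, ±e_n}`. -/
noncomputable def crossPoly (n : ℕ) : Set (Fin n → ℝ) :=
  convexHull ℝ {x | IsCPVertex n x}

/-- A `φ`-monotone path on `◇^{n+2}`, encoded as the list of its vertices:
it starts at `-e_n`, ends at `e_n`, visits only vertices, is strictly `φ`-increasing,
and consecutive vertices are not antipodal. -/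
def IsMonoPath (n : ℕ) (a : Fin (n + 2) → ℝ) (l : List (Fin (n + 2) → ℝ)) : Prop :=
  l.head? = some (-lastVec n) ∧
  l.getLast? = some (lastVec n) ∧
  (∀ v ∈ l, IsCPVertex (n + 2) v) ∧
  l.Chain' (fun u v => phi n a u < phi n a v ∧ v ≠ -u)

/-- A monotone path is combinatorially coherent if no antipodal pair `±e_j`
(`j ∈ {1, …, n-1}`) occurs among its interior vertices. -/
def CombCoherent (n : ℕ) (l : List (Fin (n + 2) → ℝ)) : Prop :=
  ¬ ∃ j : Fin (n + 1), stdVec (n + 2) j.castSucc ∈ l.tail.dropLast ∧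
      -stdVec (n + 2) j.castSucc ∈ l.tail.dropLast

/-- The Billera–Sturmfels point `p(γ)` associated to a monotone path. -/
noncomputable def pathPoint (n : ℕ) (a : Fin (n + 2) → ℝ) (l : List (Fin (n + 2) → ℝ)) :
    Fin (n + 2) → ℝ :=
  ((l.zip l.tail).map fun q =>
    ((phi n a q.2 - phi n a q.1) / (4 * a (Fin.last (n + 1)))) • (q.1 + q.2)).sum

/-- The monotone path polytope `MPP_φ(◇^{n+2})`. -/
noncomputable def MPP (n : ℕ) (a : Fin (n + 2) → ℝ) : Set (Fin (n + 2) → ℝ) :=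
  convexHull ℝ {x | ∃ l, IsMonoPath n a l ∧ x = pathPoint n a l}

open Classical in
/-- The sign vector `σ(γ) ∈ {-1,0,1}^{n+1}` of a monotone path. -/
noncomputable def sigmaVec (n : ℕ) (l : List (Fin (n + 2) → ℝ)) : Fin (n + 1) → ℤ :=
  fun j =>
    if stdVec (n + 2) j.castSucc ∈ l then 1
    else if -stdVec (n + 2) j.castSucc ∈ l then -1 else 0


/-- `δ` is obtained from `γ` by deleting exactly one interior vertex. -/
def IsFlipDeletion (n : ℕ) (γ δ : List (Fin (n + 2) → ℝ)) : Prop :=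
  ∃ k : ℕ, 1 ≤ k ∧ k + 1 < γ.length ∧ δ = γ.eraseIdx k

/-- The flip graph of `(◇^{n+2}, φ)`: vertices are the `φ`-monotone paths, two paths
being adjacent iff one is obtained from the other by deleting one interior vertex. -/
def flipGraph (n : ℕ) (a : Fin (n + 2) → ℝ) :
    SimpleGraph {l : List (Fin (n + 2) → ℝ) // IsMonoPath n a l} where
  Adj γ δ := IsFlipDeletion n γ.1 δ.1 ∨ IsFlipDeletion n δ.1 γ.1
  symm := by
    constructor
    intro γ δ h
    exact h.symm
  loopless := by
    constructor
    rintro γ (⟨k, hk1, hk2, hk3⟩ | ⟨k, hk1, hk2, hk3⟩) <;>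
    · have hlen := congrArg List.length hk3
      have h2 : ((γ.1).eraseIdx k).length + 1 = γ.1.length :=
        List.length_eraseIdx_add_one (by omega)
      omega


section Basics
variable {n : ℕ} {a : Fin (n + 2) → ℝ}

lemma stdVec_apply (n : ℕ) (i j : Fin n) : stdVec n i j = if j = i then 1 else 0 :=
  Pi.single_apply i 1 j

lemma phi_stdVec (a : Fin (n+2) → ℝ) (i : Fin (n+2)) : phi n a (stdVec (n+2) i) = a i := by
  simp [phi, stdVec, Pi.single_apply, mul_ite]

lemma phi_neg (a : Fin (n+2) → ℝ) (x : Fin (n+2) → ℝ) : phi n a (-x) = - phi n a x := by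
  simp [phi, ← Finset.sum_neg_distrib, mul_comm]

lemma stdVec_inj {i j : Fin (n+2)} (h : stdVec (n+2) i = stdVec (n+2) j) : i = j := by
  by_contra hne
  have := congrFun h i
  simp [stdVec_apply, hne] at this

lemma stdVec_ne_neg (i j : Fin (n+2)) : stdVec (n+2) i ≠ -stdVec (n+2) j := by
  intro h
  have := congrFun h i
  simp only [stdVec_apply, Pi.neg_apply, if_pos rfl] at this
  by_cases hij : i = j
  · simp [hij] at this; linarith
  · simp [hij] at this

variable (h0 : 0 < a 0) (ha : StrictMono a)
include h0 ha

lemma apos (i : Fin (n+2)) : 0 < a i := lt_of_lt_of_le h0 (ha.monotone (Fin.zero_le i))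

lemma vertex_phi_inj {u v : Fin (n+2) → ℝ} (hu : IsCPVertex (n+2) u) (hv : IsCPVertex (n+2) v)
    (h : phi n a u = phi n a v) : u = v := by
  obtain ⟨i, hi | hi⟩ := hu <;> obtain ⟨j, hj | hj⟩ := hv <;> subst hi hj <;>
    simp only [phi_neg, phi_stdVec] at h
  · rw [ha.injective h]
  · exact absurd h (by have := apos h0 ha i; have := apos h0 ha j; intro hh; linarith)
  · exact absurd h (by have := apos h0 ha i; have := apos h0 ha j; intro hh; linarith)
  · rw [ha.injective (neg_injective h)]

omit h0 ha in
lemma neg_lastVec_ne : -lastVec n ≠ lastVec n := by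
  intro h; exact stdVec_ne_neg _ _ h.symm

end Basics

section Paths
variable {n : ℕ} {a : Fin (n + 2) → ℝ}

/-- The step relation of a monotone path. -/
def MRel (n : ℕ) (a : Fin (n + 2) → ℝ) (u v : Fin (n + 2) → ℝ) : Prop :=
  phi n a u < phi n a v ∧ v ≠ -u

/-- Monotone paths on interior lists. -/
def Ppath (n : ℕ) (a : Fin (n + 2) → ℝ) (m : List (Fin (n + 2) → ℝ)) : Prop :=
  IsMonoPath n a ((-lastVec n) :: m ++ [lastVec n])

lemma interior_eq (m : List (Fin (n + 2) → ℝ)) :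
    ((-lastVec n) :: m ++ [lastVec n]).tail.dropLast = m := by
  simp [List.dropLast_concat]

lemma monopath_decomp {l : List (Fin (n + 2) → ℝ)} (h : IsMonoPath n a l) :
    l = (-lastVec n) :: l.tail.dropLast ++ [lastVec n] := by
  obtain ⟨h1, h2, -, -⟩ := h
  rcases l with _ | ⟨x, t⟩
  · simp at h1
  · simp only [List.head?_cons, Option.some.injEq] at h1
    subst h1
    rcases t.eq_nil_or_concat with ht | ⟨t', y, ht⟩
    · subst ht
      simp at h2
      exact absurd h2 neg_lastVec_ne
    · subst ht
      rw [List.concat_eq_append] at h2 ⊢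
      have : ((-lastVec n) :: (t' ++ [y])).getLast? = some y := by
        rw [show (-lastVec n) :: (t' ++ [y]) = ((-lastVec n) :: t') ++ [y] by simp,
          List.getLast?_concat]
      rw [this] at h2
      simp only [Option.some.injEq] at h2
      subst h2
      simp [List.dropLast_concat]

lemma Ppath_iff (m : List (Fin (n + 2) → ℝ)) :
    Ppath n a m ↔ (∀ v ∈ m, IsCPVertex (n + 2) v) ∧
      List.Chain' (MRel n a) ((-lastVec n) :: m ++ [lastVec n]) := by
  constructor
  · rintro ⟨-, -, hv, hc⟩
    exact ⟨fun v hv' => hv v (by simp [hv']), hc⟩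
  · rintro ⟨hv, hc⟩
    refine ⟨rfl, ?_, ?_, hc⟩
    · rw [show (-lastVec n) :: m ++ [lastVec n] = ((-lastVec n) :: m) ++ [lastVec n] by simp,
        List.getLast?_concat]
    · intro v hv'
      simp only [List.cons_append, List.mem_cons, List.mem_append, List.mem_singleton] at hv'
      rcases hv' with rfl | hv' | hv'
      · exact ⟨Fin.last (n+1), Or.inr rfl⟩
      · exact hv v hv'
      · rcases hv' with rfl | h'
        · exact ⟨Fin.last (n+1), Or.inl rfl⟩
        · exact absurd h' (List.not_mem_nil)


lemma monopath_Ppath {l : List (Fin (n + 2) → ℝ)} (h : IsMonoPath n a l) :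
    Ppath n a l.tail.dropLast := by
  rw [Ppath, ← monopath_decomp h]; exact h

lemma Ppath.pairwise {m : List (Fin (n + 2) → ℝ)} (h : Ppath n a m) :
    List.Pairwise (fun u v => phi n a u < phi n a v) ((-lastVec n) :: m ++ [lastVec n]) := by
  have hc := ((Ppath_iff m).1 h).2
  have : List.Chain' (fun u v : Fin (n+2) → ℝ => phi n a u < phi n a v)
      ((-lastVec n) :: m ++ [lastVec n]) := hc.imp fun _ _ h => h.1
  haveI : IsTrans (Fin (n+2) → ℝ) (fun u v => phi n a u < phi n a v) :=
    ⟨fun _ _ _ h1 h2 => lt_trans h1 h2⟩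
  exact List.isChain_iff_pairwise.1 ‹List.Chain' _ _›

lemma Ppath.nodup {m : List (Fin (n + 2) → ℝ)} (h : Ppath n a m) :
    ((-lastVec n) :: m ++ [lastVec n]).Nodup :=
  h.pairwise.imp fun hlt => by intro he; rw [he] at hlt; exact lt_irrefl _ hlt

end Paths

section PairSet
variable {n : ℕ} {a : Fin (n + 2) → ℝ}

open Classical in
/-- The set of incoherent indices of an interior list. -/
noncomputable def pairSet (n : ℕ) (m : List (Fin (n + 2) → ℝ)) : Finset (Fin (n + 1)) :=
  Finset.univ.filter fun j =>
    stdVec (n + 2) j.castSucc ∈ m ∧ -stdVec (n + 2) j.castSucc ∈ m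

open Classical in
lemma mem_pairSet {m : List (Fin (n + 2) → ℝ)} {j : Fin (n + 1)} :
    j ∈ pairSet n m ↔ stdVec (n + 2) j.castSucc ∈ m ∧ -stdVec (n + 2) j.castSucc ∈ m := by
  simp [pairSet]

lemma combCoherent_iff (m : List (Fin (n + 2) → ℝ)) :
    CombCoherent n ((-lastVec n) :: m ++ [lastVec n]) ↔ pairSet n m = ∅ := by
  rw [CombCoherent, interior_eq]
  simp only [Finset.eq_empty_iff_forall_notMem, mem_pairSet, not_exists]

lemma eraseIdx_append_cons (l₁ l₂ : List (Fin (n + 2) → ℝ)) (x : Fin (n + 2) → ℝ) :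
    (l₁ ++ x :: l₂).eraseIdx l₁.length = l₁ ++ l₂ := by
  induction l₁ with
  | nil => simp
  | cons y t ih => simp [ih]

lemma eraseIdx_append_cons' (l₁ l₂ : List (Fin (n + 2) → ℝ)) (x : Fin (n + 2) → ℝ)
    (i : ℕ) (hi : i = l₁.length) :
    (l₁ ++ x :: l₂).eraseIdx i = l₁ ++ l₂ := by
  subst hi; exact eraseIdx_append_cons l₁ l₂ x

/-- Any flip deletion from a monotone path has the canonical split form. -/
lemma deletion_split {γ δ : List (Fin (n + 2) → ℝ)} (hγ : IsMonoPath n a γ)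
    (hd : IsFlipDeletion n γ δ) :
    ∃ m₁ m₂ v, γ = (-lastVec n) :: (m₁ ++ v :: m₂) ++ [lastVec n] ∧
      δ = (-lastVec n) :: (m₁ ++ m₂) ++ [lastVec n] := by
  obtain ⟨k, hk1, hk2, hk3⟩ := hd
  obtain ⟨m, rfl⟩ : ∃ m, γ = (-lastVec n) :: m ++ [lastVec n] :=
    ⟨γ.tail.dropLast, monopath_decomp hγ⟩
  obtain ⟨j, rfl⟩ : ∃ j, k = j + 1 := ⟨k - 1, by omega⟩
  have hjm : j < m.length := by simp at hk2; omega
  refine ⟨m.take j, m.drop (j+1), m[j]'hjm, ?_, ?_⟩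
  · conv_lhs => rw [← List.take_append_drop j m, List.drop_eq_getElem_cons hjm]
  · rw [hk3]
    have hsplit : (-lastVec n) :: m ++ [lastVec n]
        = ((-lastVec n) :: m.take j) ++ m[j] :: (m.drop (j+1) ++ [lastVec n]) := by
      conv_lhs => rw [← List.take_append_drop j m, List.drop_eq_getElem_cons hjm]
      simp only [List.cons_append, List.append_assoc]
    rw [hsplit, eraseIdx_append_cons' _ _ _ _ (by simp [List.length_take]; omega)]
    simp only [List.cons_append, List.append_assoc]

lemma flipDeletion_of_split (m₁ m₂ : List (Fin (n + 2) → ℝ)) (v : Fin (n + 2) → ℝ) :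
    IsFlipDeletion n ((-lastVec n) :: (m₁ ++ v :: m₂) ++ [lastVec n])
      ((-lastVec n) :: (m₁ ++ m₂) ++ [lastVec n]) := by
  refine ⟨m₁.length + 1, by omega, by simp, ?_⟩
  have hsplit : (-lastVec n) :: (m₁ ++ v :: m₂) ++ [lastVec n]
      = ((-lastVec n) :: m₁) ++ v :: (m₂ ++ [lastVec n]) := by
    simp only [List.cons_append, List.append_assoc]
  rw [hsplit, eraseIdx_append_cons' _ _ _ _ (by simp)]
  simp only [List.cons_append, List.append_assoc]

end PairSet

section DeltaF
variable {n : ℕ} {a : Fin (n + 2) → ℝ}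

lemma castSucc_std_inj {j₁ j₂ : Fin (n + 1)}
    (h : stdVec (n + 2) j₁.castSucc = stdVec (n + 2) j₂.castSucc) : j₁ = j₂ :=
  Fin.castSucc_injective _ (stdVec_inj h)

lemma pairSet_card_del (m₁ m₂ : List (Fin (n + 2) → ℝ)) (v : Fin (n + 2) → ℝ) :
    (pairSet n (m₁ ++ v :: m₂)).card ≤ (pairSet n (m₁ ++ m₂)).card + 1 ∧
    (pairSet n (m₁ ++ m₂)).card ≤ (pairSet n (m₁ ++ v :: m₂)).card := by
  classical
  set S := pairSet n (m₁ ++ v :: m₂) with hS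
  set T := pairSet n (m₁ ++ m₂) with hT
  have hsub : T ⊆ S := by
    intro j hj
    rw [mem_pairSet] at hj ⊢
    constructor
    · rcases (List.mem_append.1 hj.1) with h | h
      · exact List.mem_append.2 (Or.inl h)
      · exact List.mem_append.2 (Or.inr (List.mem_cons_of_mem _ h))
    · rcases (List.mem_append.1 hj.2) with h | h
      · exact List.mem_append.2 (Or.inl h)
      · exact List.mem_append.2 (Or.inr (List.mem_cons_of_mem _ h))
  refine ⟨?_, Finset.card_le_card hsub⟩
  have hdiff : ∀ j ∈ S \ T, v = stdVec (n + 2) j.castSucc ∨ v = -stdVec (n + 2) j.castSucc := by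
    intro j hj
    rw [Finset.mem_sdiff] at hj
    obtain ⟨hjS, hjT⟩ := hj
    rw [mem_pairSet] at hjS
    by_contra hcon
    push_neg at hcon
    apply hjT
    rw [mem_pairSet]
    constructor
    · rcases List.mem_append.1 hjS.1 with h | h
      · exact List.mem_append.2 (Or.inl h)
      · rcases List.mem_cons.1 h with h' | h'
        · exact absurd h'.symm hcon.1
        · exact List.mem_append.2 (Or.inr h')
    · rcases List.mem_append.1 hjS.2 with h | h
      · exact List.mem_append.2 (Or.inl h)
      · rcases List.mem_cons.1 h with h' | h'
        · exact absurd h'.symm hcon.2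
        · exact List.mem_append.2 (Or.inr h')
  have hcard1 : (S \ T).card ≤ 1 := by
    rw [Finset.card_le_one]
    intro j₁ h₁ j₂ h₂
    rcases hdiff j₁ h₁ with h1 | h1 <;> rcases hdiff j₂ h₂ with h2 | h2
    · exact castSucc_std_inj (h1.symm.trans h2)
    · exact absurd (h1.symm.trans h2) (stdVec_ne_neg _ _)
    · exact absurd (h2.symm.trans h1) (stdVec_ne_neg _ _)
    · exact castSucc_std_inj (neg_injective (h1.symm.trans h2))
  calc S.card ≤ (T ∪ (S \ T)).card := Finset.card_le_card (by
        intro j hj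
        rw [Finset.mem_union, Finset.mem_sdiff]
        by_cases h : j ∈ T
        · exact Or.inl h
        · exact Or.inr ⟨hj, h⟩)
    _ ≤ T.card + (S \ T).card := Finset.card_union_le _ _
    _ ≤ T.card + 1 := by omega

/-- The number of incoherent pairs of a monotone path. -/
noncomputable def fCard (n : ℕ) (a : Fin (n + 2) → ℝ)
    (γ : {l : List (Fin (n + 2) → ℝ) // IsMonoPath n a l}) : ℕ :=
  (pairSet n γ.1.tail.dropLast).card

lemma fCard_of_full {m : List (Fin (n + 2) → ℝ)} (h : IsMonoPath n a ((-lastVec n) :: m ++ [lastVec n])) :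
    fCard n a ⟨_, h⟩ = (pairSet n m).card := by
  rw [fCard, interior_eq]

lemma adj_fCard {γ δ : {l : List (Fin (n + 2) → ℝ) // IsMonoPath n a l}}
    (hadj : (flipGraph n a).Adj γ δ) :
    fCard n a γ ≤ fCard n a δ + 1 := by
  rcases hadj with hd | hd
  · obtain ⟨m₁, m₂, v, hγ, hδ⟩ := deletion_split γ.2 hd
    have h1 : fCard n a γ = (pairSet n (m₁ ++ v :: m₂)).card := by
      rw [fCard, hγ, interior_eq]
    have h2 : fCard n a δ = (pairSet n (m₁ ++ m₂)).card := by
      rw [fCard, hδ, interior_eq]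
    rw [h1, h2]
    exact (pairSet_card_del m₁ m₂ v).1
  · obtain ⟨m₁, m₂, v, hδ, hγ⟩ := deletion_split δ.2 hd
    have h1 : fCard n a γ = (pairSet n (m₁ ++ m₂)).card := by
      rw [fCard, hγ, interior_eq]
    have h2 : fCard n a δ = (pairSet n (m₁ ++ v :: m₂)).card := by
      rw [fCard, hδ, interior_eq]
    rw [h1, h2]
    exact le_trans (pairSet_card_del m₁ m₂ v).2 (Nat.le_succ_of_le le_rfl)

lemma walk_fCard {γ δ : {l : List (Fin (n + 2) → ℝ) // IsMonoPath n a l}}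
    (w : (flipGraph n a).Walk γ δ) :
    fCard n a γ ≤ fCard n a δ + w.length := by
  induction w with
  | nil => simp
  | cons h p ih =>
    have := adj_fCard h
    rw [SimpleGraph.Walk.length_cons]
    omega

end DeltaF

section Step
variable {n : ℕ} {a : Fin (n + 2) → ℝ} {m : List (Fin (n + 2) → ℝ)}

lemma phi_lastVec (a : Fin (n + 2) → ℝ) : phi n a (lastVec n) = a (Fin.last (n+1)) :=
  phi_stdVec a _

lemma phi_neg_lastVec (a : Fin (n + 2) → ℝ) : phi n a (-lastVec n) = -a (Fin.last (n+1)) := by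
  rw [lastVec, phi_neg, phi_stdVec]

lemma Ppath.vertex_mem (hp : Ppath n a m) {x : Fin (n + 2) → ℝ} (hx : x ∈ m) :
    IsCPVertex (n+2) x :=
  ((Ppath_iff m).1 hp).1 x hx

lemma Ppath.chainFull (hp : Ppath n a m) :
    List.Chain' (MRel n a) ((-lastVec n) :: m ++ [lastVec n]) :=
  ((Ppath_iff m).1 hp).2

lemma Ppath.chain_m (hp : Ppath n a m) : List.Chain' (MRel n a) m :=
  ((List.isChain_append.1 (List.isChain_cons.1 hp.chainFull).2).1)

lemma Ppath.pairwise_m (hp : Ppath n a m) :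
    List.Pairwise (fun u v => phi n a u < phi n a v) m :=
  ((List.pairwise_append.1 (List.pairwise_cons.1 hp.pairwise).2).1)

lemma Ppath.phi_lt_of_mem (hp : Ppath n a m) {x : Fin (n + 2) → ℝ} (hx : x ∈ m) :
    phi n a x < a (Fin.last (n+1)) := by
  have h := (List.pairwise_append.1 (List.pairwise_cons.1 hp.pairwise).2).2.2 x hx
    (lastVec n) (List.mem_singleton_self _)
  rwa [phi_lastVec] at h

lemma Ppath.phi_gt_of_mem (hp : Ppath n a m) {x : Fin (n + 2) → ℝ} (hx : x ∈ m) :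
    -a (Fin.last (n+1)) < phi n a x := by
  have h := (List.pairwise_cons.1 hp.pairwise).1 x (List.mem_append_left _ hx)
  rwa [phi_neg_lastVec] at h

lemma Ppath.nodup_m (hp : Ppath n a m) : m.Nodup :=
  hp.pairwise_m.imp fun hlt => by intro he; rw [he] at hlt; exact lt_irrefl _ hlt

variable (h0 : 0 < a 0) (ha : StrictMono a)
include h0 ha

lemma zero_not_mem_pairSet (hp : Ppath n a m) : (0 : Fin (n+1)) ∉ pairSet n m := by
  intro hcon
  rw [mem_pairSet] at hcon
  obtain ⟨hP, hN⟩ := hcon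
  have hc0 : ((0 : Fin (n+1)).castSucc : Fin (n+2)) = 0 := rfl
  have hEphi : phi n a (stdVec (n+2) (0 : Fin (n+1)).castSucc) = a 0 := by
    rw [phi_stdVec, hc0]
  have hNphi : phi n a (-stdVec (n+2) (0 : Fin (n+1)).castSucc) = -(a 0) := by
    rw [phi_neg, hEphi]
  obtain ⟨m₁, m₂, hm⟩ := List.append_of_mem hN
  have hpwm := hp.pairwise_m
  have hchm := hp.chain_m
  rw [hm] at hpwm hchm hP
  obtain ⟨hpw1, hpwc, hcross⟩ := List.pairwise_append.1 hpwm
  -- E ∈ m₂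
  have hEm2 : stdVec (n+2) (0 : Fin (n+1)).castSucc ∈ m₂ := by
    rcases List.mem_append.1 hP with h | h
    · have := hcross _ h _ (List.mem_cons_self)
      rw [hEphi, hNphi] at this
      linarith
    · rcases List.mem_cons.1 h with h' | h'
      · exact absurd h' (stdVec_ne_neg _ _)
      · exact h'
  rcases m₂ with _ | ⟨w, m₂'⟩
  · simp at hEm2
  have hrel : MRel n a (-stdVec (n+2) (0 : Fin (n+1)).castSucc) w :=
    (List.isChain_cons_cons.1 (List.isChain_append.1 hchm).2.1).1
  have hwE : w ≠ stdVec (n+2) (0 : Fin (n+1)).castSucc := by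
    have := hrel.2
    rwa [neg_neg] at this
  have hEm2' : stdVec (n+2) (0 : Fin (n+1)).castSucc ∈ m₂' := by
    rcases List.mem_cons.1 hEm2 with h' | h'
    · exact absurd h'.symm hwE
    · exact h'
  have hwlt : phi n a w < a 0 := by
    have := (List.pairwise_cons.1 ((List.pairwise_cons.1 hpwc).2)).1 _ hEm2'
    rwa [hEphi] at this
  have hwgt : -(a 0) < phi n a w := by
    have := hrel.1
    rwa [hNphi] at this
  have hwm : w ∈ m := by
    rw [hm]; exact List.mem_append_right _ (List.mem_cons_of_mem _ (List.mem_cons_self))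
  obtain ⟨i, hi | hi⟩ := hp.vertex_mem hwm
  · rw [hi, phi_stdVec] at hwlt
    exact absurd ((ha.lt_iff_lt).1 hwlt) (by simp)
  · rw [hi, phi_neg, phi_stdVec] at hwgt
    have : a i < a 0 := by linarith
    exact absurd ((ha.lt_iff_lt).1 this) (by simp)

lemma pairSet_card_le (hp : Ppath n a m) : (pairSet n m).card ≤ n := by
  have hz := zero_not_mem_pairSet h0 ha hp
  have hsub : pairSet n m ⊆ Finset.univ.erase (0 : Fin (n+1)) := by
    intro i hi
    exact Finset.mem_erase.2 ⟨fun h => hz (h ▸ hi), Finset.mem_univ _⟩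
  have := Finset.card_le_card hsub
  rwa [Finset.card_erase_of_mem (Finset.mem_univ _), Finset.card_univ, Fintype.card_fin,
    Nat.add_sub_cancel] at this

end Step

section StepDel
variable {n : ℕ} {a : Fin (n + 2) → ℝ} {m : List (Fin (n + 2) → ℝ)}
variable (h0 : 0 < a 0) (ha : StrictMono a)
include h0 ha

lemma step_del (hp : Ppath n a m) (hne : (pairSet n m).Nonempty) :
    ∃ m', Ppath n a m' ∧
      IsFlipDeletion n ((-lastVec n) :: m ++ [lastVec n]) ((-lastVec n) :: m' ++ [lastVec n]) ∧
      (pairSet n m').card + 1 ≤ (pairSet n m).card := by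
  classical
  obtain ⟨j, hjmem0, hjmax⟩ : ∃ j ∈ pairSet n m, ∀ i ∈ pairSet n m, i ≤ j :=
    ⟨(pairSet n m).max' hne, Finset.max'_mem _ hne, fun i hi => Finset.le_max' _ i hi⟩
  have hjmem := mem_pairSet.1 hjmem0
  obtain ⟨hposj, hnegj⟩ := hjmem
  obtain ⟨m₁, m₂, hm⟩ := List.append_of_mem hposj
  have hpwm := hp.pairwise_m
  rw [hm] at hpwm
  obtain ⟨hpw1, hpwc, hcross⟩ := List.pairwise_append.1 hpwm
  have hE2 : ∀ w ∈ m₂, phi n a (stdVec (n+2) j.castSucc) < phi n a w :=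
    fun w hw => (List.pairwise_cons.1 hpwc).1 w hw
  have haj : 0 < a j.castSucc := apos h0 ha _
  have hphiE : phi n a (stdVec (n+2) j.castSucc) = a j.castSucc := phi_stdVec a _
  have hphiN : phi n a (-stdVec (n+2) j.castSucc) = -(a j.castSucc) := by
    rw [phi_neg, hphiE]
  -- -E ∈ m₁
  have hNm1 : -stdVec (n+2) j.castSucc ∈ m₁ := by
    have h' : -stdVec (n+2) j.castSucc ∈ m₁ ++ stdVec (n+2) j.castSucc :: m₂ := hm ▸ hnegj
    rcases List.mem_append.1 h' with h | h
    · exact h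
    · rcases List.mem_cons.1 h with h' | h'
      · exact absurd h' (fun hh => stdVec_ne_neg _ _ hh.symm)
      · have := hE2 _ h'
        rw [hphiE, hphiN] at this
        linarith
  have hm1ne : m₁ ≠ [] := List.ne_nil_of_mem hNm1
  -- chain decomposition
  have hch := hp.chainFull
  have hsh : (-lastVec n) :: (m₁ ++ stdVec (n+2) j.castSucc :: m₂) ++ [lastVec n]
      = ((-lastVec n) :: m₁) ++ stdVec (n+2) j.castSucc :: (m₂ ++ [lastVec n]) := by
    simp only [List.cons_append, List.append_assoc]
  rw [hm, hsh] at hch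
  obtain ⟨hcA, hcB, hAB⟩ := List.isChain_append.1 hch
  obtain ⟨hEB, hcB'⟩ := List.isChain_cons.1 hcB
  have hBne : m₂ ++ [lastVec n] ≠ [] := by simp
  set x := ((-lastVec n) :: m₁).getLast (List.cons_ne_nil _ _) with hxdef
  set y := (m₂ ++ [lastVec n]).head hBne with hydef
  have hxE : MRel n a x (stdVec (n+2) j.castSucc) := by
    apply hAB x _ _ rfl
    rw [List.getLast?_eq_getLast (List.cons_ne_nil _ _)]
    rfl
  have hEy : MRel n a (stdVec (n+2) j.castSucc) y := by
    apply hEB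
    rw [List.head?_eq_head hBne]
    rfl
  have hxm1 : x ∈ m₁ := by
    rw [hxdef, List.getLast_cons hm1ne]
    exact List.getLast_mem _
  have hxm : x ∈ m := by rw [hm]; exact List.mem_append_left _ hxm1
  have hyB : y ∈ m₂ ++ [lastVec n] := List.head_mem hBne
  -- the new chain
  have hchain' : List.Chain' (MRel n a) ((-lastVec n) :: (m₁ ++ m₂) ++ [lastVec n]) := by
    have hsh2 : (-lastVec n) :: (m₁ ++ m₂) ++ [lastVec n]
        = ((-lastVec n) :: m₁) ++ (m₂ ++ [lastVec n]) := by
      simp only [List.cons_append, List.append_assoc]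
    rw [hsh2]
    refine List.isChain_append.2 ⟨hcA, hcB', ?_⟩
    intro x' hx' y' hy'
    have hx'' : x' = x := by
      rw [List.getLast?_eq_getLast (List.cons_ne_nil _ _)] at hx'
      exact (Option.some_inj.1 hx').symm ▸ rfl
    have hy'' : y' = y := by
      rw [List.head?_eq_head hBne] at hy'
      exact (Option.some_inj.1 hy').symm ▸ rfl
    subst hx'' hy''
    refine ⟨lt_trans hxE.1 hEy.1, ?_⟩
    intro hxy
    -- y = -x leads to contradiction with maximality of j
    have hphiyx : phi n a y = - phi n a x := by rw [hxy, phi_neg]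
    have hxlt : phi n a x < a j.castSucc := by rw [← hphiE]; exact hxE.1
    have hygt : a j.castSucc < phi n a y := by rw [← hphiE]; exact hEy.1
    obtain ⟨i, hxi | hxi⟩ := hp.vertex_mem hxm
    · rw [hxi, phi_stdVec] at hxlt hphiyx
      have := apos h0 ha i
      linarith [hphiyx ▸ hygt]
    · have hyi : y = stdVec (n+2) i := by rw [hxy, hxi, neg_neg]
      have hphiy : phi n a y = a i := by rw [hyi, phi_stdVec]
      -- y ∈ m₂ (not lastVec)
      have hym2 : y ∈ m₂ := by
        rcases List.mem_append.1 hyB with h | h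
        · exact h
        · exfalso
          rw [List.mem_singleton] at h
          have hil : i = Fin.last (n+1) := stdVec_inj (by rw [← hyi, h, lastVec])
          have := hp.phi_gt_of_mem hxm
          rw [hxi, hil, phi_neg, phi_stdVec] at this
          exact lt_irrefl _ this
      have hym : y ∈ m := by rw [hm]; exact List.mem_append_right _ (List.mem_cons_of_mem _ hym2)
      have hilast : i ≠ Fin.last (n+1) := by
        intro hil
        have := hp.phi_lt_of_mem hym
        rw [hphiy, hil] at this
        exact lt_irrefl _ this
      obtain ⟨i', hi'⟩ := Fin.exists_castSucc_eq.2 hilast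
      have hi'mem : i' ∈ pairSet n m := by
        rw [mem_pairSet, hi']
        exact ⟨by rwa [← hyi], by rwa [← hxi]⟩
      have hle : i' ≤ j := hjmax i' hi'mem
      have : a j.castSucc < a i'.castSucc := by rw [hi']; rw [hphiy] at hygt; exact hygt
      have : j.castSucc < i'.castSucc := (ha.lt_iff_lt).1 this
      rw [Fin.castSucc_lt_castSucc_iff] at this
      exact absurd hle (not_le.2 this)
  refine ⟨m₁ ++ m₂, ?_, ?_, ?_⟩
  · refine (Ppath_iff _).2 ⟨?_, hchain'⟩
    intro v hv
    apply hp.vertex_mem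
    rw [hm]
    rcases List.mem_append.1 hv with h | h
    · exact List.mem_append_left _ h
    · exact List.mem_append_right _ (List.mem_cons_of_mem _ h)
  · rw [hm]; exact flipDeletion_of_split m₁ m₂ _
  · -- cardinality decrease
    have hEnotin : stdVec (n+2) j.castSucc ∉ m₁ ++ m₂ := by
      intro hcon
      rcases List.mem_append.1 hcon with h | h
      · have := hcross _ h _ (List.mem_cons_self)
        exact lt_irrefl _ this
      · exact lt_irrefl _ (hE2 _ h)
    have hsub : pairSet n (m₁ ++ m₂) ⊆ (pairSet n m).erase j := by
      intro i hi
      rw [Finset.mem_erase]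
      have hi' := mem_pairSet.1 hi
      constructor
      · intro hij
        subst hij
        exact hEnotin hi'.1
      · rw [mem_pairSet, hm]
        refine ⟨?_, ?_⟩
        · rcases List.mem_append.1 hi'.1 with h | h
          · exact List.mem_append_left _ h
          · exact List.mem_append_right _ (List.mem_cons_of_mem _ h)
        · rcases List.mem_append.1 hi'.2 with h | h
          · exact List.mem_append_left _ h
          · exact List.mem_append_right _ (List.mem_cons_of_mem _ h)
    have h1 := Finset.card_le_card hsub
    rw [Finset.card_erase_of_mem hjmem0] at h1
    have h2 : 1 ≤ (pairSet n m).card := Finset.card_pos.2 hne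
    omega

end StepDel

section Upper
variable {n : ℕ} {a : Fin (n + 2) → ℝ}
variable (h0 : 0 < a 0) (ha : StrictMono a)
include h0 ha

lemma reach_coherent : ∀ (k : ℕ) (γ : {l : List (Fin (n + 2) → ℝ) // IsMonoPath n a l}),
    fCard n a γ ≤ k → ∃ δ : {l : List (Fin (n + 2) → ℝ) // IsMonoPath n a l},
      CombCoherent n δ.1 ∧ ∃ w : (flipGraph n a).Walk γ δ, w.length ≤ k := by
  intro k
  induction k with
  | zero =>
    intro γ hγ
    refine ⟨γ, ?_, SimpleGraph.Walk.nil, le_rfl⟩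
    have hdec := monopath_decomp γ.2
    have : pairSet n γ.1.tail.dropLast = ∅ := Finset.card_eq_zero.1 (Nat.le_zero.1 hγ)
    rw [show γ.1 = (-lastVec n) :: γ.1.tail.dropLast ++ [lastVec n] from hdec]
    exact (combCoherent_iff _).2 this
  | succ k ih =>
    intro γ hγ
    by_cases hne : (pairSet n γ.1.tail.dropLast).Nonempty
    · have hp : Ppath n a γ.1.tail.dropLast := monopath_Ppath γ.2
      obtain ⟨m', hp', hdel, hcard⟩ := step_del h0 ha hp hne
      have hδmono : IsMonoPath n a ((-lastVec n) :: m' ++ [lastVec n]) := hp'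
      set δ' : {l : List (Fin (n + 2) → ℝ) // IsMonoPath n a l} := ⟨_, hδmono⟩ with hδ'
      have hadj : (flipGraph n a).Adj γ δ' := by
        left
        rw [show γ.1 = (-lastVec n) :: γ.1.tail.dropLast ++ [lastVec n] from monopath_decomp γ.2]
        exact hdel
      have hfc : fCard n a δ' ≤ k := by
        have h1 : fCard n a δ' = (pairSet n m').card := fCard_of_full hδmono
        rw [h1]
        rw [fCard] at hγ
        omega
      obtain ⟨δ, hcoh, w, hw⟩ := ih δ' hfc
      exact ⟨δ, hcoh, SimpleGraph.Walk.cons hadj w, by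
        rw [SimpleGraph.Walk.length_cons]; omega⟩
    · have hγ0 : fCard n a γ ≤ 0 := by
        rw [fCard, Finset.not_nonempty_iff_eq_empty.1 hne]
        simp
      obtain ⟨δ, hcoh, w, hw⟩ := ih γ (le_trans hγ0 (Nat.zero_le _))
      exact ⟨δ, hcoh, w, le_trans hw (Nat.le_succ _)⟩

lemma fCard_le_n (γ : {l : List (Fin (n + 2) → ℝ) // IsMonoPath n a l}) :
    fCard n a γ ≤ n :=
  pairSet_card_le h0 ha (monopath_Ppath γ.2)

lemma upper_bound (γ : {l : List (Fin (n + 2) → ℝ) // IsMonoPath n a l}) :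
    ∃ δ : {l : List (Fin (n + 2) → ℝ) // IsMonoPath n a l},
      CombCoherent n δ.1 ∧ (flipGraph n a).dist γ δ ≤ n := by
  obtain ⟨δ, hcoh, w, hw⟩ := reach_coherent h0 ha n γ (fCard_le_n h0 ha γ)
  exact ⟨δ, hcoh, le_trans (SimpleGraph.dist_le w) hw⟩

end Upper

section Reach
variable {n : ℕ} {a : Fin (n + 2) → ℝ}
variable (h0 : 0 < a 0) (ha : StrictMono a)

omit h0 ha in
lemma Ppath_single {x : Fin (n + 2) → ℝ} (hv : IsCPVertex (n+2) x)
    (hlt : phi n a x < a (Fin.last (n+1))) (hgt : -a (Fin.last (n+1)) < phi n a x) :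
    Ppath n a [x] := by
  refine (Ppath_iff _).2 ⟨fun v hv' => by rw [List.mem_singleton] at hv'; exact hv' ▸ hv, ?_⟩
  have hne1 : x ≠ lastVec n := by
    intro h; rw [h, phi_lastVec] at hlt; exact lt_irrefl _ hlt
  have hne2 : x ≠ -lastVec n := by
    intro h; rw [h, phi_neg_lastVec] at hgt; exact lt_irrefl _ hgt
  refine List.isChain_cons_cons.2 ⟨⟨?_, ?_⟩, List.isChain_cons_cons.2 ⟨⟨?_, ?_⟩, List.isChain_singleton _⟩⟩
  · rw [phi_neg_lastVec]; exact hgt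
  · rw [neg_neg]; exact hne1
  · rw [phi_lastVec]; exact hlt
  · intro h
    exact hne2 (by rw [← neg_neg x, ← h])

omit h0 ha in
lemma Ppath_single_elim {x : Fin (n + 2) → ℝ} (hx : Ppath n a [x]) :
    IsCPVertex (n+2) x ∧ phi n a x < a (Fin.last (n+1)) ∧ -a (Fin.last (n+1)) < phi n a x :=
  ⟨hx.vertex_mem (List.mem_singleton_self x),
   hx.phi_lt_of_mem (List.mem_singleton_self x),
   hx.phi_gt_of_mem (List.mem_singleton_self x)⟩

omit h0 ha in
lemma Ppath_pair {x y : Fin (n + 2) → ℝ} (hx : Ppath n a [x]) (hy : Ppath n a [y])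
    (hlt : phi n a x < phi n a y) (hne : y ≠ -x) : Ppath n a [x, y] := by
  obtain ⟨hvx, hxlt, hxgt⟩ := Ppath_single_elim hx
  obtain ⟨hvy, hylt, hygt⟩ := Ppath_single_elim hy
  refine (Ppath_iff _).2 ⟨?_, ?_⟩
  · intro v hv
    rcases List.mem_cons.1 hv with rfl | hv
    · exact hvx
    · rw [List.mem_singleton] at hv; exact hv ▸ hvy
  · have h1 : x ≠ lastVec n := by
      intro h; rw [h, phi_lastVec] at hxlt; exact lt_irrefl _ hxlt
    have h2 : x ≠ -lastVec n := by
      intro h; rw [h, phi_neg_lastVec] at hxgt; exact lt_irrefl _ hxgt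
    refine List.isChain_cons_cons.2 ⟨⟨?_, ?_⟩, List.isChain_cons_cons.2 ⟨⟨hlt, hne⟩,
      List.isChain_cons_cons.2 ⟨⟨?_, ?_⟩, List.isChain_singleton _⟩⟩⟩
    · rw [phi_neg_lastVec]; exact hxgt
    · rw [neg_neg]; exact h1
    · rw [phi_lastVec]; exact hylt
    · intro h
      have : y = -lastVec n := by rw [← neg_neg y, ← h]
      rw [this, phi_neg_lastVec] at hygt; exact lt_irrefl _ hygt

include h0 ha

lemma reach_single_nonantipodal {x y : Fin (n + 2) → ℝ} (hx : Ppath n a [x]) (hy : Ppath n a [y])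
    (hne : y ≠ -x) :
    (flipGraph n a).Reachable ⟨_, hx⟩ ⟨_, hy⟩ := by
  rcases lt_trichotomy (phi n a x) (phi n a y) with hlt | heq | hgt
  · have hpair := Ppath_pair hx hy hlt hne
    have had1 : (flipGraph n a).Adj ⟨_, hpair⟩ ⟨_, hx⟩ :=
      Or.inl (flipDeletion_of_split [x] [] y)
    have had2 : (flipGraph n a).Adj ⟨_, hpair⟩ ⟨_, hy⟩ :=
      Or.inl (flipDeletion_of_split [] [y] x)
    exact (had1.symm.reachable).trans had2.reachable
  · have : x = y := vertex_phi_inj h0 ha (Ppath_single_elim hx).1 (Ppath_single_elim hy).1 heq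
    subst this
    exact SimpleGraph.Reachable.refl _
  · have hne' : x ≠ -y := by
      intro h; apply hne; rw [h, neg_neg]
    have hpair := Ppath_pair hy hx hgt hne'
    have had1 : (flipGraph n a).Adj ⟨_, hpair⟩ ⟨_, hy⟩ :=
      Or.inl (flipDeletion_of_split [y] [] x)
    have had2 : (flipGraph n a).Adj ⟨_, hpair⟩ ⟨_, hx⟩ :=
      Or.inl (flipDeletion_of_split [] [x] y)
    exact (had2.symm.reachable).trans had1.reachable

lemma reach_single_single (hn : 1 ≤ n) {x y : Fin (n + 2) → ℝ}
    (hx : Ppath n a [x]) (hy : Ppath n a [y]) :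
    (flipGraph n a).Reachable ⟨_, hx⟩ ⟨_, hy⟩ := by
  by_cases hne : y = -x
  · obtain ⟨hvx, hxlt, hxgt⟩ := Ppath_single_elim hx
    have hilast : ∀ i : Fin (n+2), (x = stdVec (n+2) i ∨ x = -stdVec (n+2) i) →
        i ≠ Fin.last (n+1) := by
      rintro i (hi | hi) hil <;> subst hil
      · rw [hi, phi_stdVec] at hxlt; exact lt_irrefl _ hxlt
      · rw [hi, phi_neg, phi_stdVec] at hxgt; exact lt_irrefl _ hxgt
    obtain ⟨i, hi⟩ := hvx
    obtain ⟨i₀, hi₀⟩ := Fin.exists_castSucc_eq.2 (hilast i hi)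
    haveI : Nontrivial (Fin (n+1)) := Fin.nontrivial_iff_two_le.2 (by omega)
    obtain ⟨i₁, hi₁⟩ := exists_ne i₀
    have hzlt : phi n a (stdVec (n+2) i₁.castSucc) < a (Fin.last (n+1)) := by
      rw [phi_stdVec]
      exact ha (Fin.castSucc_lt_last _)
    have hzgt : -a (Fin.last (n+1)) < phi n a (stdVec (n+2) i₁.castSucc) := by
      rw [phi_stdVec]
      have := apos h0 ha i₁.castSucc
      have := apos h0 ha (Fin.last (n+1))
      linarith
    have hz : Ppath n a [stdVec (n+2) i₁.castSucc] := Ppath_single ⟨i₁.castSucc, Or.inl rfl⟩ hzlt hzgt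
    have hzx : stdVec (n+2) i₁.castSucc ≠ -x ∧ stdVec (n+2) i₁.castSucc ≠ x := by
      subst hi₀
      rcases hi with hi | hi <;> subst hi
      · exact ⟨stdVec_ne_neg _ _, fun h =>
          hi₁ (Fin.castSucc_injective _ (stdVec_inj h))⟩
      · refine ⟨fun h => hi₁ (Fin.castSucc_injective _ (stdVec_inj (by rwa [neg_neg] at h))),
          stdVec_ne_neg _ _⟩
    have hr1 : (flipGraph n a).Reachable ⟨_, hx⟩ ⟨_, hz⟩ :=
      reach_single_nonantipodal h0 ha hx hz hzx.1
    have hr2 : (flipGraph n a).Reachable ⟨_, hz⟩ ⟨_, hy⟩ :=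
      reach_single_nonantipodal h0 ha hz hy (by
        rw [hne]
        intro h
        exact hzx.2 (neg_injective h).symm)
    exact hr1.trans hr2
  · exact reach_single_nonantipodal h0 ha hx hy hne

end Reach

section Connect
variable {n : ℕ} {a : Fin (n + 2) → ℝ}
variable (h0 : 0 < a 0) (ha : StrictMono a)

lemma reach_to_single : ∀ (m : List (Fin (n + 2) → ℝ)) (hp : Ppath n a m),
    ∃ (x : Fin (n + 2) → ℝ) (hx : Ppath n a [x]),
      (flipGraph n a).Reachable ⟨_, hp⟩ ⟨_, hx⟩ := by
  intro m
  induction m with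
  | nil =>
    intro hp
    exfalso
    have hc : List.IsChain (MRel n a) [-lastVec n, lastVec n] := hp.chainFull
    exact (List.isChain_cons_cons.1 hc).1.2 (by rw [neg_neg])
  | cons x m' ih =>
    intro hp
    rcases m' with _ | ⟨y, rest⟩
    · exact ⟨x, hp, SimpleGraph.Reachable.refl _⟩
    · have hchfull := hp.chainFull
      have hylt : phi n a y < a (Fin.last (n+1)) := hp.phi_lt_of_mem (by simp)
      have hyne : y ≠ lastVec n := fun h => by
        rw [h, phi_lastVec] at hylt; exact lt_irrefl _ hylt
      have hp' : Ppath n a (y :: rest) := by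
        refine (Ppath_iff _).2 ⟨fun v hv => hp.vertex_mem (List.mem_cons_of_mem _ hv), ?_⟩
        simp only [List.cons_append] at hchfull ⊢
        obtain ⟨h1, hrest⟩ := List.isChain_cons_cons.1 hchfull
        obtain ⟨h2, hrest2⟩ := List.isChain_cons_cons.1 hrest
        exact List.isChain_cons_cons.2 ⟨⟨lt_trans h1.1 h2.1, by rw [neg_neg]; exact hyne⟩, hrest2⟩
      have hadj : (flipGraph n a).Adj ⟨_, hp⟩ ⟨_, hp'⟩ :=
        Or.inl (flipDeletion_of_split [] (y :: rest) x)
      obtain ⟨z, hz, hr⟩ := ih hp'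
      exact ⟨z, hz, hadj.reachable.trans hr⟩

include h0 ha in
lemma reach_all (hn : 1 ≤ n) (γ δ : {l : List (Fin (n + 2) → ℝ) // IsMonoPath n a l}) :
    (flipGraph n a).Reachable γ δ := by
  have hγp : Ppath n a γ.1.tail.dropLast := monopath_Ppath γ.2
  have hδp : Ppath n a δ.1.tail.dropLast := monopath_Ppath δ.2
  have hγeq : γ = ⟨_, hγp⟩ := Subtype.ext (monopath_decomp γ.2)
  have hδeq : δ = ⟨_, hδp⟩ := Subtype.ext (monopath_decomp δ.2)
  obtain ⟨x, hx, hrx⟩ := reach_to_single _ hγp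
  obtain ⟨y, hy, hry⟩ := reach_to_single _ hδp
  rw [hγeq, hδeq]
  exact (hrx.trans (reach_single_single h0 ha hn hx hy)).trans hry.symm

end Connect

section LowerWitness
variable {n : ℕ} {a : Fin (n + 2) → ℝ}

/-- Index helper. -/
def pIdx (n k : ℕ) : Fin (n + 2) := ⟨min k (n + 1), by omega⟩

/-- The interior of the extremal path `-e_n, …, -e_1, e_0, e_1, …, e_n`. -/
noncomputable def pInt (n : ℕ) : ℕ → List (Fin (n + 2) → ℝ)
  | 0 => [stdVec (n + 2) (pIdx n 0)]
  | (k+1) => (-stdVec (n + 2) (pIdx n (k+1))) :: (pInt n k ++ [stdVec (n + 2) (pIdx n (k+1))])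

lemma pInt_ne_nil (k : ℕ) : pInt n k ≠ [] := by cases k <;> simp [pInt]

lemma pInt_struct : ∀ (k : ℕ), ∀ x ∈ pInt n k,
    ∃ i : ℕ, i ≤ k ∧ (x = stdVec (n + 2) (pIdx n i) ∨ x = -stdVec (n + 2) (pIdx n i)) := by
  intro k
  induction k with
  | zero =>
    intro x hx
    rw [pInt, List.mem_singleton] at hx
    exact ⟨0, le_rfl, Or.inl hx⟩
  | succ k ih =>
    intro x hx
    rw [pInt] at hx
    rcases List.mem_cons.1 hx with rfl | hx
    · exact ⟨k+1, le_rfl, Or.inr rfl⟩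
    · rcases List.mem_append.1 hx with hx | hx
      · obtain ⟨i, hik, hi⟩ := ih x hx
        exact ⟨i, Nat.le_succ_of_le hik, hi⟩
      · rw [List.mem_singleton] at hx
        exact ⟨k+1, le_rfl, Or.inl hx⟩

variable (h0 : 0 < a 0) (ha : StrictMono a)
include h0 ha

omit h0 in
lemma pIdx_a_le {i k : ℕ} (hik : i ≤ k) : a (pIdx n i) ≤ a (pIdx n k) := by
  apply ha.monotone
  rw [Fin.le_def]
  simp [pIdx]
  omega

omit h0 in
lemma pIdx_a_lt {i k : ℕ} (hik : i < k) (hk : k ≤ n + 1) : a (pIdx n i) < a (pIdx n k) := by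
  apply ha
  rw [Fin.lt_def]
  simp [pIdx]
  omega

lemma pInt_phi_bound (k : ℕ) : ∀ x ∈ pInt n k,
    -a (pIdx n k) ≤ phi n a x ∧ phi n a x ≤ a (pIdx n k) := by
  intro x hx
  obtain ⟨i, hik, hi | hi⟩ := pInt_struct k x hx <;> subst hi
  · rw [phi_stdVec]
    have h1 := pIdx_a_le ha (n := n) hik
    have h2 := apos h0 ha (pIdx n i)
    constructor <;> linarith
  · rw [phi_neg, phi_stdVec]
    have h1 := pIdx_a_le ha (n := n) hik
    have h2 := apos h0 ha (pIdx n i)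
    constructor <;> linarith

lemma pInt_mrel_last {k l : ℕ} (hkl : k < l) (hl : l ≤ n + 1) :
    ∀ x ∈ pInt n k, MRel n a x (stdVec (n + 2) (pIdx n l)) := by
  intro x hx
  obtain ⟨i, hik, hi⟩ := pInt_struct k x hx
  have hne : pIdx n i ≠ pIdx n l := by
    intro h
    rw [Fin.ext_iff] at h
    simp [pIdx] at h
    omega
  constructor
  · have := (pInt_phi_bound h0 ha k x hx).2
    have := pIdx_a_lt ha (n := n) hkl hl
    rw [phi_stdVec]
    linarith
  · rcases hi with hi | hi <;> subst hi
    · intro h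
      exact stdVec_ne_neg _ _ h
    · rw [neg_neg]
      intro h
      exact hne (stdVec_inj h.symm)

lemma pInt_mrel_head {k l : ℕ} (hkl : k < l) (hl : l ≤ n + 1) :
    ∀ x ∈ pInt n k, MRel n a (-stdVec (n + 2) (pIdx n l)) x := by
  intro x hx
  obtain ⟨i, hik, hi⟩ := pInt_struct k x hx
  have hne : pIdx n i ≠ pIdx n l := by
    intro h
    rw [Fin.ext_iff] at h
    simp [pIdx] at h
    omega
  constructor
  · have := (pInt_phi_bound h0 ha k x hx).1
    have := pIdx_a_lt ha (n := n) hkl hl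
    rw [phi_neg, phi_stdVec]
    linarith
  · rcases hi with hi | hi <;> subst hi
    · rw [neg_neg]
      intro h
      exact hne (stdVec_inj h)
    · rw [neg_neg]
      intro h
      exact stdVec_ne_neg _ _ h.symm

lemma pInt_chain : ∀ (k : ℕ), k ≤ n + 1 → List.Chain' (MRel n a) (pInt n k) := by
  intro k
  induction k with
  | zero => intro _; rw [pInt]; exact List.isChain_singleton _
  | succ k ih =>
    intro hk
    rw [pInt]
    refine List.isChain_cons.2 ⟨?_, ?_⟩
    · intro y hy
      rw [List.head?_append_of_ne_nil _ (pInt_ne_nil k)] at hy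
      exact pInt_mrel_head h0 ha (Nat.lt_succ_self k) hk y (List.mem_of_mem_head? hy)
    · refine List.isChain_append.2 ⟨ih (by omega), List.isChain_singleton _, ?_⟩
      intro u hu v hv
      have hv2 : stdVec (n + 2) (pIdx n (k+1)) = v := by simpa using hv
      subst hv2
      exact pInt_mrel_last h0 ha (Nat.lt_succ_self k) hk u (List.mem_of_mem_getLast? hu)

lemma pInt_Ppath : Ppath n a (pInt n n) := by
  refine (Ppath_iff _).2 ⟨?_, ?_⟩
  · intro v hv
    obtain ⟨i, _, hi | hi⟩ := pInt_struct n v hv <;> subst hi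
    · exact ⟨_, Or.inl rfl⟩
    · exact ⟨_, Or.inr rfl⟩
  · have hfin : Fin.last (n + 1) = pIdx n (n + 1) := by
      apply Fin.ext
      show n + 1 = min (n + 1) (n + 1)
      omega
    have hlast : lastVec n = stdVec (n + 2) (pIdx n (n + 1)) :=
      congrArg (stdVec (n + 2)) hfin
    refine List.isChain_cons.2 ⟨?_, ?_⟩
    · intro y hy
      have hy' : y ∈ (pInt n n ++ [lastVec n]).head? := hy
      rw [List.head?_append_of_ne_nil _ (pInt_ne_nil (n := n) n)] at hy'
      rw [hlast]
      exact pInt_mrel_head h0 ha (Nat.lt_succ_self n) le_rfl y (List.mem_of_mem_head? hy')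
    · refine List.isChain_append.2 ⟨pInt_chain h0 ha n (by omega), List.isChain_singleton _, ?_⟩
      intro u hu v hv
      have hv2 : lastVec n = v := by simpa using hv
      subst hv2
      rw [hlast]
      exact pInt_mrel_last h0 ha (Nat.lt_succ_self n) le_rfl u (List.mem_of_mem_getLast? hu)

omit h0 ha in
lemma pInt_mem_pos : ∀ (k : ℕ), ∀ i ≤ k, stdVec (n + 2) (pIdx n i) ∈ pInt n k := by
  intro k
  induction k with
  | zero =>
    intro i hi
    interval_cases i
    rw [pInt]
    exact List.mem_singleton_self _
  | succ k ih =>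
    intro i hi
    rw [pInt]
    rcases Nat.lt_succ_iff_lt_or_eq.1 (Nat.lt_succ_of_le hi) with h | h
    · exact List.mem_cons_of_mem _ (List.mem_append_left _ (ih i (by omega)))
    · subst h
      exact List.mem_cons_of_mem _ (List.mem_append_right _ (List.mem_singleton_self _))

omit h0 ha in
lemma pInt_mem_neg : ∀ (k : ℕ), ∀ i, 1 ≤ i → i ≤ k → -stdVec (n + 2) (pIdx n i) ∈ pInt n k := by
  intro k
  induction k with
  | zero => intro i h1 h2; omega
  | succ k ih =>
    intro i h1 h2
    rw [pInt]
    rcases Nat.lt_succ_iff_lt_or_eq.1 (Nat.lt_succ_of_le h2) with h | h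
    · exact List.mem_cons_of_mem _ (List.mem_append_left _ (ih i h1 (by omega)))
    · subst h
      exact List.mem_cons_self

omit h0 ha in
lemma pairSet_pInt_card : n ≤ (pairSet n (pInt n n)).card := by
  classical
  have hsub : Finset.univ.erase (0 : Fin (n+1)) ⊆ pairSet n (pInt n n) := by
    intro j hj
    rw [Finset.mem_erase] at hj
    have hj1 : 1 ≤ (j : ℕ) := by
      rcases Nat.eq_zero_or_pos (j : ℕ) with h | h
      · exact absurd (Fin.ext h) hj.1
      · exact h
    have hcast : j.castSucc = pIdx n (j : ℕ) := by
      apply Fin.ext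
      show (j : ℕ) = min (j : ℕ) (n + 1)
      omega
    rw [mem_pairSet, hcast]
    exact ⟨pInt_mem_pos n _ (by omega), pInt_mem_neg n _ hj1 (by omega)⟩
  have := Finset.card_le_card hsub
  rwa [Finset.card_erase_of_mem (Finset.mem_univ _), Finset.card_univ, Fintype.card_fin,
    Nat.add_sub_cancel] at this

end LowerWitness


/-- In the flip graph of `(◇^{n+2}, φ)`, the maximum over all
`φ`-monotone paths `γ` of the minimum flip distance from `γ` to a combinatorially
coherent path equals `n` (i.e. the paper's `n - 2`). -/
theorem max_flip_distance_to_coherent (n : ℕ) (a : Fin (n + 2) → ℝ)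
    (h0 : 0 < a 0) (ha : StrictMono a) :
    (∀ γ : {l : List (Fin (n + 2) → ℝ) // IsMonoPath n a l},
      ∃ δ : {l : List (Fin (n + 2) → ℝ) // IsMonoPath n a l},
        CombCoherent n δ.1 ∧ (flipGraph n a).dist γ δ ≤ n) ∧
    (∃ γ : {l : List (Fin (n + 2) → ℝ) // IsMonoPath n a l},
      ∀ δ : {l : List (Fin (n + 2) → ℝ) // IsMonoPath n a l},
        CombCoherent n δ.1 → n ≤ (flipGraph n a).dist γ δ) := by
  
  constructor
  · intro γ
    exact upper_bound h0 ha γ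
  · refine ⟨⟨_, pInt_Ppath h0 ha⟩, ?_⟩
    intro δ hcoh
    by_cases hn : 1 ≤ n
    · have hfγ : n ≤ fCard n a (⟨_, pInt_Ppath h0 ha⟩ :
          {l : List (Fin (n + 2) → ℝ) // IsMonoPath n a l}) := by
        rw [fCard_of_full (pInt_Ppath h0 ha)]
        exact pairSet_pInt_card
      have hfδ : fCard n a δ = 0 := by
        have hcoh' := hcoh
        rw [monopath_decomp δ.2] at hcoh'
        rw [fCard, (combCoherent_iff _).1 hcoh']
        simp
      have hreach := reach_all h0 ha hn ⟨_, pInt_Ppath h0 ha⟩ δ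
      obtain ⟨w, hw⟩ := hreach.exists_walk_length_eq_dist
      have hwalk := walk_fCard w
      omega
    · omega
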